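/- Let θ = (1/2)·arctan(2). For all Gaussian integers z, w ∈ ℤ[i] ⊆ ℂ (complex numbers with integer real and imaginary parts) with (z, w) ≠ (0, 0), one has z·cosθ − w·sinθ ≠ 0. In particular, the 2 × 2 rotation matrix P by angle θ satisfies the full-diversity condition of the paper's Theorem 3: the first entry of P·Δx is nonzero for every nonzero difference vector Δx of vectors with entries in any QAM constellation. -/

import Mathlib

lemma irr_tan_half : Irrational (Real.tan ((1 / 2) * Real.arctan 2)) := by
  set θ : ℝ := (1 / 2) * Real.arctan 2 with hθ
  set t : ℝ := Real.tan θ with ht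
  have harc : (0:ℝ) < Real.arctan 2 := by
    rw [← Real.arctan_zero]; exact Real.arctan_strictMono (by norm_num)
  have hθpos : 0 < θ := by rw [hθ]; linarith
  have hθlt : θ < Real.pi / 2 := by
    have h1 := Real.arctan_lt_pi_div_two 2
    rw [hθ]; linarith
  have htpos : 0 < t := Real.tan_pos_of_pos_of_lt_pi_div_two hθpos hθlt
  have htan2 : 2 * t / (1 - t ^ 2) = 2 := by
    rw [← Real.tan_two_mul, show 2 * θ = Real.arctan 2 by rw [hθ]; ring,
      Real.tan_arctan]
  have hne : 1 - t ^ 2 ≠ 0 := by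
    intro h0; rw [h0, div_zero] at htan2; norm_num at htan2
  have hkey : t ^ 2 + t = 1 := by
    field_simp at htan2; nlinarith
  have hsq : Real.sqrt 5 = 2 * t + 1 := by
    rw [show (5:ℝ) = (2 * t + 1) ^ 2 by nlinarith]
    exact Real.sqrt_sq (by linarith)
  have h5 : Irrational (Real.sqrt 5) := by
    simpa using (by norm_num : Nat.Prime 5).irrational_sqrt
  have hirr : Irrational ((Real.sqrt 5 - (1:ℤ)) / (2:ℤ)) :=
    (h5.sub_intCast 1).div_intCast (by norm_num)
  have heq : t = (Real.sqrt 5 - (1:ℤ)) / (2:ℤ) := by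
    rw [hsq]; push_cast; ring
  rwa [← heq] at hirr

theorem stmt15 (z w : ℂ)
    (hz : ∃ a b : ℤ, z = (a : ℂ) + (b : ℂ) * Complex.I)
    (hw : ∃ a b : ℤ, w = (a : ℂ) + (b : ℂ) * Complex.I)
    (hzw : ¬(z = 0 ∧ w = 0)) :
    z * (Real.cos ((1 / 2) * Real.arctan 2) : ℂ) -
      w * (Real.sin ((1 / 2) * Real.arctan 2) : ℂ) ≠ 0 := by
  obtain ⟨a, b, rfl⟩ := hz
  obtain ⟨c, d, rfl⟩ := hw
  set θ : ℝ := (1 / 2) * Real.arctan 2 with hθ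
  have harc : (0:ℝ) < Real.arctan 2 := by
    rw [← Real.arctan_zero]; exact Real.arctan_strictMono (by norm_num)
  have hθpos : 0 < θ := by rw [hθ]; linarith
  have hθlt : θ < Real.pi / 2 := by
    have h1 := Real.arctan_lt_pi_div_two 2
    rw [hθ]; linarith
  have hcos : 0 < Real.cos θ := Real.cos_pos_of_mem_Ioo ⟨by linarith, hθlt⟩
  have hirr := irr_tan_half
  rw [← hθ, Real.tan_eq_sin_div_cos] at hirr
  intro h0
  rw [sub_eq_zero, Complex.ext_iff] at h0
  simp [Complex.add_re, Complex.add_im, Complex.mul_re, Complex.mul_im, Complex.cos_ofReal_re, Complex.sin_ofReal_re] at h0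
  obtain ⟨hre, him⟩ := h0
  by_cases hc : (c:ℝ) = 0
  · by_cases hd : (d:ℝ) = 0
    · apply hzw
      rw [hc, zero_mul] at hre
      rw [hd, zero_mul] at him
      have ha : (a:ℝ) = 0 := (mul_eq_zero.mp hre).resolve_right hcos.ne'
      have hb : (b:ℝ) = 0 := (mul_eq_zero.mp him).resolve_right hcos.ne'
      norm_cast at ha hb hc hd
      simp [ha, hb, hc, hd]
    · exact hirr ⟨(b:ℚ)/(d:ℚ), by
        push_cast
        rw [div_eq_div_iff (by exact_mod_cast hd) hcos.ne']
        linear_combination him⟩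
  · exact hirr ⟨(a:ℚ)/(c:ℚ), by
      push_cast
      rw [div_eq_div_iff (by exact_mod_cast hc) hcos.ne']
      linear_combination hre⟩
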